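/- arXiv:2405.12160 — 2 statements merged into one kernel-verified Lean document; each statement's English description precedes it below -/
import Mathlib

section
/- If G is a noncyclic finite p-group and t is the number of cyclic subgroups of G, then |G| ≤ t^t. -/
lemma isCyclic_zpowers' {G : Type*} [Group G] (x : G) :
    IsCyclic (Subgroup.zpowers x) := by
  refine ⟨⟨⟨x, Subgroup.mem_zpowers x⟩, fun y => ?_⟩⟩
  obtain ⟨k, hk⟩ := y.2
  exact ⟨k, Subtype.ext (by simpa using hk)⟩

theorem stmt13 (p : ℕ) (hp : p.Prime) (G : Type*) [Group G] [Finite G]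
    (hG : IsPGroup p G) (hnc : ¬ IsCyclic G) (t : ℕ)
    (ht : t = Nat.card {H : Subgroup G // IsCyclic H}) :
    Nat.card G ≤ t ^ t := by
  classical
  haveI : Fact p.Prime := ⟨hp⟩
  haveI := Fintype.ofFinite G
  obtain ⟨n, hn⟩ := IsPGroup.iff_card.mp hG
  -- maximal order element
  obtain ⟨g₀, -, hg₀⟩ := Finset.exists_mem_eq_sup (Finset.univ : Finset G)
    (Finset.univ_nonempty : (Finset.univ : Finset G).Nonempty) (fun g : G => orderOf g)
  set M := (Finset.univ : Finset G).sup (fun g : G => orderOf g) with hM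
  have hMle : ∀ g : G, orderOf g ≤ M := fun g => Finset.le_sup (Finset.mem_univ g)
  have hdvd : orderOf g₀ ∣ p ^ n := by
    rw [← hn]; exact orderOf_dvd_natCard g₀
  obtain ⟨m, hmn, hMere⟩ := (Nat.dvd_prime_pow hp).mp hdvd
  have hMm : M = p ^ m := hg₀.trans hMere
  have hmlt : m < n := by
    rcases lt_or_eq_of_le hmn with h | h
    · exact h
    · exfalso
      apply hnc
      apply isCyclic_of_orderOf_eq_card g₀
      rw [hMere, h, ← hn]
  -- t ≥ m + 1 via the chain of cyclic subgroups inside ⟨g₀⟩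
  haveI : Finite {H : Subgroup G // IsCyclic H} := Subtype.finite
  have hcard_zp : ∀ i : ℕ, i ≤ m → Nat.card (Subgroup.zpowers (g₀ ^ p ^ i)) = p ^ (m - i) := by
    intro i hi
    rw [Nat.card_zpowers, orderOf_pow, hMere]
    have hgcd : Nat.gcd (p ^ m) (p ^ i) = p ^ i :=
      Nat.gcd_eq_right (pow_dvd_pow p hi)
    rw [hgcd, Nat.pow_div hi hp.pos]
  have hinj : Function.Injective
      (fun i : Fin (m + 1) =>
        (⟨Subgroup.zpowers (g₀ ^ p ^ (i : ℕ)), isCyclic_zpowers' _⟩ :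
          {H : Subgroup G // IsCyclic H})) := by
    intro i j hij
    have h1 := hcard_zp i (Nat.lt_succ_iff.mp i.2)
    have h2 := hcard_zp j (Nat.lt_succ_iff.mp j.2)
    have : Subgroup.zpowers (g₀ ^ p ^ (i : ℕ)) = Subgroup.zpowers (g₀ ^ p ^ (j : ℕ)) :=
      congrArg Subtype.val hij
    rw [this, h2] at h1
    have := Nat.pow_right_injective hp.two_le h1
    have hi := Nat.lt_succ_iff.mp i.2
    have hj := Nat.lt_succ_iff.mp j.2
    exact Fin.ext (by omega)
  have htm : m + 1 ≤ t := by
    rw [ht]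
    simpa using Nat.card_le_card_of_injective _ hinj
  -- card G ≤ t * p ^ m via fiberwise counting over cyclic subgroups
  haveI := Fintype.ofFinite {H : Subgroup G // IsCyclic H}
  have hsum : Fintype.card G =
      ∑ H : {H : Subgroup G // IsCyclic H},
        (Finset.univ.filter (fun g : G =>
          (⟨Subgroup.zpowers g, isCyclic_zpowers' g⟩ :
            {H : Subgroup G // IsCyclic H}) = H)).card := by
    exact Finset.card_eq_sum_card_fiberwise (fun g _ => Finset.mem_univ _)
  have hfiber : ∀ H : {H : Subgroup G // IsCyclic H},
      (Finset.univ.filter (fun g : G =>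
        (⟨Subgroup.zpowers g, isCyclic_zpowers' g⟩ :
          {H : Subgroup G // IsCyclic H}) = H)).card ≤ p ^ m := by
    intro H
    set s := Finset.univ.filter (fun g : G =>
        (⟨Subgroup.zpowers g, isCyclic_zpowers' g⟩ :
          {H : Subgroup G // IsCyclic H}) = H) with hs
    rcases s.eq_empty_or_nonempty with h | ⟨g₁, hg₁⟩
    · simp [h]
    · have hz1 : Subgroup.zpowers g₁ = H.1 := by
        have := (Finset.mem_filter.mp hg₁).2
        exact congrArg Subtype.val this
      have hsub : s ⊆ (Subgroup.zpowers g₁ : Set G).toFinset := by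
        intro g hg
        have hz : Subgroup.zpowers g = H.1 :=
          congrArg Subtype.val (Finset.mem_filter.mp hg).2
        rw [Set.mem_toFinset, hz1, ← hz]
        exact Subgroup.mem_zpowers g
      calc s.card ≤ (Subgroup.zpowers g₁ : Set G).toFinset.card :=
            Finset.card_le_card hsub
        _ = Fintype.card (Subgroup.zpowers g₁) := by
            rw [Set.toFinset_card]; rfl
        _ = orderOf g₁ := Fintype.card_zpowers
        _ ≤ M := hMle g₁
        _ = p ^ m := hMm
  have hGle : Fintype.card G ≤ t * p ^ m := by
    rw [hsum]
    calc ∑ H : {H : Subgroup G // IsCyclic H}, _ ≤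
        ∑ _H : {H : Subgroup G // IsCyclic H}, p ^ m :=
          Finset.sum_le_sum (fun H _ => hfiber H)
      _ = Fintype.card {H : Subgroup G // IsCyclic H} * p ^ m := by
          rw [Finset.sum_const, Finset.card_univ, smul_eq_mul]
      _ = t * p ^ m := by rw [ht, Nat.card_eq_fintype_card]
  -- p ≤ t
  have hGle' : Nat.card G ≤ t * p ^ m := by
    rw [Nat.card_eq_fintype_card]; exact hGle
  have hpn : p ^ n ≤ t * p ^ m := hn ▸ hGle'
  have hpt : p ≤ t := by
    have h1 : p * p ^ (n - 1) ≤ t * p ^ (n - 1) := by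
      calc p * p ^ (n - 1) = p ^ n := by
            rw [← pow_succ']; congr 1; omega
        _ ≤ t * p ^ m := hpn
        _ ≤ t * p ^ (n - 1) :=
            Nat.mul_le_mul_left t (Nat.pow_le_pow_right hp.pos (by omega))
    exact Nat.le_of_mul_le_mul_right h1 (Nat.pow_pos hp.pos)
  -- finish
  have ht1 : 1 ≤ t := by omega
  calc Nat.card G = p ^ n := hn
    _ ≤ t * p ^ m := hpn
    _ ≤ t * t ^ m := Nat.mul_le_mul_left t (Nat.pow_le_pow_left hpt m)
    _ = t ^ (m + 1) := (pow_succ' t m).symm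
    _ ≤ t ^ t := Nat.pow_le_pow_right ht1 htm
end

section
/- For every integer m ≥ 4 there exists a noncyclic finite abelian group G with exactly m cyclic subgroups. -/
open Subgroup Multiplicative

section Helpers

variable {p k : ℕ}

lemma myIsCyclic_zpowers {G : Type*} [Group G] (g : G) : IsCyclic (zpowers g) := by
  refine ⟨⟨⟨g, mem_zpowers g⟩, ?_⟩⟩
  rintro ⟨x, hx⟩
  obtain ⟨n, hn⟩ := mem_zpowers_iff.mp hx
  refine mem_zpowers_iff.mpr ⟨n, ?_⟩
  ext
  simpa using hn

lemma myExists_zpowers_eq {G : Type*} [Group G] {H : Subgroup G} (h : IsCyclic H) :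
    ∃ g : G, zpowers g = H := by
  obtain ⟨⟨g, hg⟩, hgen⟩ := h.exists_generator
  refine ⟨g, le_antisymm (zpowers_le.mpr hg) ?_⟩
  intro x hx
  obtain ⟨n, hn⟩ := mem_zpowers_iff.mp (hgen ⟨x, hx⟩)
  exact mem_zpowers_iff.mpr ⟨n, by simpa using congrArg (Subtype.val) hn⟩

noncomputable def myCyclicEquiv (G : Type*) [Group G] :
    {H : Subgroup G // IsCyclic H} ≃ Set.range (zpowers : G → Subgroup G) :=
  Equiv.subtypeEquivRight fun H =>
    ⟨fun h => myExists_zpowers_eq h, fun ⟨g, hg⟩ => hg ▸ myIsCyclic_zpowers g⟩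

lemma mySmulZero (hp : p.Prime) (hk : 1 ≤ k) (v : ZMod p × ZMod (p ^ k)) :
    (p ^ k) • v = 0 := by
  obtain ⟨a, b⟩ := v
  have h1 : (p ^ k) • a = 0 := by
    rw [nsmul_eq_mul, Nat.cast_pow, ZMod.natCast_self,
      zero_pow (by omega : k ≠ 0), zero_mul]
  have h2 : (p ^ k) • b = 0 := by
    rw [nsmul_eq_mul, ZMod.natCast_self, zero_mul]
  rw [Prod.smul_mk, h1, h2, Prod.mk_zero_zero]

lemma myKill (hp : p.Prime) (hk : 1 ≤ k)
    (x : Multiplicative (ZMod p × ZMod (p ^ k))) : x ^ (p ^ k) = 1 := by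
  have : x = ofAdd (toAdd x) := rfl
  rw [this, ← ofAdd_nsmul, mySmulZero hp hk, ofAdd_zero]

lemma myUnit (hp : p.Prime) (hk : 1 ≤ k)
    (x : Multiplicative (ZMod p × ZMod (p ^ k))) (m : ℕ) (hm : Nat.Coprime m p) :
    zpowers (x ^ m) = zpowers x := by
  refine le_antisymm (zpowers_le.mpr (mem_zpowers_iff.mpr ⟨(m : ℤ), zpow_natCast x m⟩)) ?_
  rw [zpowers_le]
  have hm' : Nat.Coprime m (p ^ k) := hm.pow_right k
  have hb := Nat.gcd_eq_gcd_ab m (p ^ k)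
  rw [hm', Nat.cast_one] at hb
  refine mem_zpowers_iff.mpr ⟨Nat.gcdA m (p ^ k), ?_⟩
  have hx : x ^ ((p ^ k : ℕ) : ℤ) = 1 := by
    rw [zpow_natCast, myKill hp hk]
  calc (x ^ m) ^ Nat.gcdA m (p ^ k)
      = x ^ ((m : ℤ) * Nat.gcdA m (p ^ k)) := by rw [← zpow_natCast, ← zpow_mul]
    _ = x ^ ((m : ℤ) * Nat.gcdA m (p ^ k)) * (x ^ ((p ^ k : ℕ) : ℤ)) ^ Nat.gcdB m (p ^ k) := by
        rw [hx, one_zpow, mul_one]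
    _ = x ^ ((m : ℤ) * Nat.gcdA m (p ^ k) + (p ^ k : ℕ) * Nat.gcdB m (p ^ k)) := by
        rw [zpow_add, zpow_mul, zpow_mul]
    _ = x ^ (1 : ℤ) := by rw [← hb]
    _ = x := zpow_one x

lemma myFactor {p k : ℕ} (hp : p.Prime) {b : ZMod (p ^ k)} (hb : b ≠ 0) :
    ∃ t, t < k ∧ ∃ c : ℕ, ¬ p ∣ c ∧ b = (c : ZMod (p ^ k)) * (p : ZMod (p ^ k)) ^ t := by
  haveI : NeZero (p ^ k) := ⟨pow_ne_zero k hp.pos.ne'⟩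
  have hv0 : b.val ≠ 0 := fun h => hb ((ZMod.val_eq_zero b).mp h)
  set t := (b.val).factorization p with ht
  refine ⟨t, ?_, b.val / p ^ t, Nat.not_dvd_ordCompl hp hv0, ?_⟩
  · have h1 : p ^ t ∣ b.val := Nat.ordProj_dvd _ _
    have h2 : b.val < p ^ k := ZMod.val_lt b
    have := Nat.le_of_dvd (Nat.pos_of_ne_zero hv0) h1
    exact (Nat.pow_lt_pow_iff_right hp.one_lt).mp (lt_of_le_of_lt this h2)
  · have h3 : p ^ t * (b.val / p ^ t) = b.val := Nat.ordProj_mul_ordCompl_eq_self _ _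
    have hb' : ((b.val : ℕ) : ZMod (p ^ k)) = b := by
      rw [ZMod.natCast_val, ZMod.cast_id]
    calc b = ((b.val : ℕ) : ZMod (p ^ k)) := hb'.symm
      _ = ((p ^ t * (b.val / p ^ t) : ℕ) : ZMod (p ^ k)) := by rw [h3]
      _ = ((b.val / p ^ t : ℕ) : ZMod (p ^ k)) * (p : ZMod (p ^ k)) ^ t := by
            push_cast; ring

lemma myOrdA (hp : p.Prime) (a : ZMod p) : addOrderOf a ∣ p := by
  haveI : Fact p.Prime := ⟨hp⟩
  refine addOrderOf_dvd_of_nsmul_eq_zero ?_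
  rw [nsmul_eq_mul, ZMod.natCast_self, zero_mul]

lemma myOrdP (hp : p.Prime) {t : ℕ} (htk : t < k) :
    addOrderOf ((p : ZMod (p ^ k)) ^ t) = p ^ (k - t) := by
  have hn0 : p ^ k ≠ 0 := pow_ne_zero k hp.pos.ne'
  have h : ((p : ZMod (p ^ k)) ^ t) = ((p ^ t : ℕ) : ZMod (p ^ k)) := by push_cast; ring
  rw [h, ZMod.addOrderOf_coe _ hn0, Nat.gcd_eq_right (pow_dvd_pow p htk.le),
    Nat.pow_div htk.le hp.pos]

lemma myOrderGen (hp : p.Prime) {t : ℕ} (htk : t < k) (a : ZMod p) :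
    orderOf (ofAdd ((a, (p : ZMod (p ^ k)) ^ t) : ZMod p × ZMod (p ^ k))) = p ^ (k - t) := by
  rw [orderOf_ofAdd_eq_addOrderOf, Prod.addOrderOf, myOrdP hp htk]
  have hd : addOrderOf a ∣ p ^ (k - t) :=
    (myOrdA hp a).trans (dvd_pow_self p (by omega : k - t ≠ 0))
  exact Nat.dvd_antisymm (Nat.lcm_dvd hd dvd_rfl) (Nat.dvd_lcm_right _ _)

lemma myOrderOne (hp : p.Prime) (hk : 1 ≤ k) :
    orderOf (ofAdd (((1 : ZMod p), (0 : ZMod (p ^ k))) : ZMod p × ZMod (p ^ k))) = p := by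
  rw [orderOf_ofAdd_eq_addOrderOf, Prod.addOrderOf, addOrderOf_zero,
    ZMod.addOrderOf_one, Nat.lcm_one_right]

lemma myMem {x y : ZMod p × ZMod (p ^ k)} :
    ofAdd y ∈ zpowers (ofAdd x) ↔ ∃ n : ℤ, n • x = y := by
  rw [mem_zpowers_iff]
  constructor
  · rintro ⟨n, hn⟩
    exact ⟨n, by simpa [← ofAdd_zsmul] using hn⟩
  · rintro ⟨n, hn⟩
    exact ⟨n, by rw [← ofAdd_zsmul, hn]⟩

-- from (n : R) * p^t = p^t with t < k, deduce ((n:ℤ) : ZMod p) = 1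
lemma myCong (hp : p.Prime) {t : ℕ} (htk : t < k) {n : ℤ}
    (h : (n : ZMod (p ^ k)) * (p : ZMod (p ^ k)) ^ t = (p : ZMod (p ^ k)) ^ t) :
    ((n : ℤ) : ZMod p) = 1 := by
  have h2 : (((n - 1) * p ^ t : ℤ) : ZMod (p ^ k)) = 0 := by
    push_cast
    rw [sub_mul, one_mul, h, sub_self]
  rw [ZMod.intCast_zmod_eq_zero_iff_dvd] at h2
  have h3 : ((p : ℤ) ^ t * (p : ℤ) ^ (k - t)) ∣ (p : ℤ) ^ t * (n - 1) := by
    rw [← pow_add]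
    have : t + (k - t) = k := by omega
    rw [this, mul_comm ((p:ℤ)^t)]
    exact_mod_cast h2
  have h4 : ((p : ℤ) ^ (k - t)) ∣ (n - 1) :=
    (mul_dvd_mul_iff_left (pow_ne_zero t (by exact_mod_cast hp.pos.ne'))).mp h3
  have h5 : (p : ℤ) ∣ n - 1 :=
    dvd_trans (dvd_pow_self _ (by omega : k - t ≠ 0)) h4
  have h6 : ((n - 1 : ℤ) : ZMod p) = 0 := (ZMod.intCast_zmod_eq_zero_iff_dvd _ _).mpr h5
  push_cast at h6
  linear_combination h6

-- from (n : R) * p^t = 0 with t < k, deduce ((n:ℤ) : ZMod p) = 0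
lemma myCong0 (hp : p.Prime) {t : ℕ} (htk : t < k) {n : ℤ}
    (h : (n : ZMod (p ^ k)) * (p : ZMod (p ^ k)) ^ t = 0) :
    ((n : ℤ) : ZMod p) = 0 := by
  have h2 : ((n * p ^ t : ℤ) : ZMod (p ^ k)) = 0 := by push_cast; rw [h]
  rw [ZMod.intCast_zmod_eq_zero_iff_dvd] at h2
  have h3 : ((p : ℤ) ^ t * (p : ℤ) ^ (k - t)) ∣ (p : ℤ) ^ t * n := by
    rw [← pow_add]
    have : t + (k - t) = k := by omega
    rw [this, mul_comm ((p:ℤ)^t)]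
    exact_mod_cast h2
  have h4 : ((p : ℤ) ^ (k - t)) ∣ n :=
    (mul_dvd_mul_iff_left (pow_ne_zero t (by exact_mod_cast hp.pos.ne'))).mp h3
  have h5 : (p : ℤ) ∣ n := dvd_trans (dvd_pow_self _ (by omega : k - t ≠ 0)) h4
  exact (ZMod.intCast_zmod_eq_zero_iff_dvd _ _).mpr h5

end Helpers

section Main

variable {p k : ℕ}

/-- the canonical generators -/
def myGen (p k : ℕ) : (ZMod p × Fin k) ⊕ Bool → Multiplicative (ZMod p × ZMod (p ^ k))
  | Sum.inl (a, j) => ofAdd (a, (p : ZMod (p ^ k)) ^ (k - 1 - j.val))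
  | Sum.inr true => ofAdd ((1 : ZMod p), 0)
  | Sum.inr false => ofAdd (0, 0)

def myF (p k : ℕ) : (ZMod p × Fin k) ⊕ Bool → Subgroup (Multiplicative (ZMod p × ZMod (p ^ k))) :=
  fun i => zpowers (myGen p k i)

lemma myF_surj (hp : p.Prime) (hk : 1 ≤ k)
    (x : Multiplicative (ZMod p × ZMod (p ^ k))) : ∃ i, zpowers x = myF p k i := by
  haveI : Fact p.Prime := ⟨hp⟩
  obtain ⟨a, b, rfl⟩ : ∃ a b, x = ofAdd (a, b) := ⟨(toAdd x).1, (toAdd x).2, rfl⟩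
  by_cases hb : b = 0
  · subst hb
    by_cases ha : a = 0
    · exact ⟨Sum.inr false, by rw [ha]; rfl⟩
    · refine ⟨Sum.inr true, ?_⟩
      have hv0 : a.val ≠ 0 := fun h => ha ((ZMod.val_eq_zero a).mp h)
      have hav : ¬ p ∣ a.val := fun hd =>
        absurd (ZMod.val_lt a) (not_lt.mpr (Nat.le_of_dvd (Nat.pos_of_ne_zero hv0) hd))
      have hcop : Nat.Coprime a.val p := (hp.coprime_iff_not_dvd.mpr hav).symm
      show zpowers (ofAdd (a, 0)) = zpowers (ofAdd ((1 : ZMod p), (0 : ZMod (p ^ k))))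
      have key : ofAdd ((a, 0) : ZMod p × ZMod (p ^ k))
          = ofAdd (((1 : ZMod p), (0 : ZMod (p ^ k)))) ^ a.val := by
        rw [← ofAdd_nsmul]
        congr 1
        rw [Prod.smul_mk, smul_zero, nsmul_eq_mul, mul_one, ZMod.natCast_val, ZMod.cast_id]
      rw [key, myUnit hp hk _ _ hcop]
  · obtain ⟨t, htk, c, hc, rfl⟩ := myFactor hp hb
    have hcp : (c : ZMod p) ≠ 0 := by
      rw [Ne, ZMod.natCast_eq_zero_iff]; exact hc
    refine ⟨Sum.inl (((c : ZMod p))⁻¹ * a, ⟨k - 1 - t, by omega⟩), ?_⟩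
    have ht' : k - 1 - (k - 1 - t) = t := by omega
    show zpowers _ = zpowers (ofAdd ((((c : ZMod p))⁻¹ * a, (p : ZMod (p ^ k)) ^ (k - 1 - (k - 1 - t)))))
    rw [ht']
    have key : ofAdd ((a, (c : ZMod (p ^ k)) * (p : ZMod (p ^ k)) ^ t) : ZMod p × ZMod (p ^ k))
        = ofAdd ((((c : ZMod p))⁻¹ * a, (p : ZMod (p ^ k)) ^ t)) ^ c := by
      rw [← ofAdd_nsmul]
      congr 1
      rw [Prod.smul_mk, nsmul_eq_mul, nsmul_eq_mul, mul_inv_cancel_left₀ hcp]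
    rw [key, myUnit hp hk _ c ((hp.coprime_iff_not_dvd.mpr hc).symm)]

lemma myOrderF (hp : p.Prime) (a : ZMod p) (j : Fin k) :
    orderOf (myGen p k (Sum.inl (a, j))) = p ^ (j.val + 1) := by
  have hjk := j.isLt
  have htk : k - 1 - j.val < k := by omega
  show orderOf (ofAdd ((a, (p : ZMod (p ^ k)) ^ (k - 1 - j.val)))) = p ^ (j.val + 1)
  rw [myOrderGen hp htk a]
  congr 1
  omega

lemma myF_ne (hp : p.Prime) (a : ZMod p) (j : Fin k) :
    myF p k (Sum.inl (a, j)) ≠ myF p k (Sum.inr true) := by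
  haveI : Fact p.Prime := ⟨hp⟩
  have hjk := j.isLt
  intro h
  have horder : orderOf (myGen p k (Sum.inl (a, j))) = orderOf (myGen p k (Sum.inr true)) := by
    rw [← Nat.card_zpowers, ← Nat.card_zpowers]
    exact congrArg (fun H : Subgroup (Multiplicative (ZMod p × ZMod (p ^ k))) => Nat.card H) h
  rw [myOrderF hp, show orderOf (myGen p k (Sum.inr true)) = p from myOrderOne hp (by omega)]
      at horder
  have hj0 : j.val = 0 := by
    have := Nat.pow_right_injective hp.two_le (horder.trans (pow_one p).symm)
    omega
  have hmem : myGen p k (Sum.inr true) ∈ myF p k (Sum.inl (a, j)) := h ▸ mem_zpowers _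
  have hmem' : ofAdd (((1 : ZMod p), (0 : ZMod (p ^ k))))
      ∈ zpowers (ofAdd ((a, (p : ZMod (p ^ k)) ^ (k - 1 - j.val)))) := hmem
  rw [myMem] at hmem'
  obtain ⟨n, hn⟩ := hmem'
  rw [Prod.smul_mk, Prod.mk.injEq] at hn
  obtain ⟨hn1, hn2⟩ := hn
  rw [zsmul_eq_mul] at hn2
  have h0 : ((n : ℤ) : ZMod p) = 0 := myCong0 hp (show k - 1 - j.val < k by omega) hn2
  rw [zsmul_eq_mul, h0, zero_mul] at hn1
  exact zero_ne_one hn1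

lemma myF_inj (hp : p.Prime) (hk : 1 ≤ k) : Function.Injective (myF p k) := by
  haveI : Fact p.Prime := ⟨hp⟩
  have horder : ∀ i i', myF p k i = myF p k i' →
      orderOf (myGen p k i) = orderOf (myGen p k i') := by
    intro i i' h
    rw [← Nat.card_zpowers, ← Nat.card_zpowers]
    exact congrArg (fun H : Subgroup (Multiplicative (ZMod p × ZMod (p ^ k))) => Nat.card H) h
  intro i i' h
  rcases i with ⟨a, j⟩ | bi <;> rcases i' with ⟨a', j'⟩ | bi'
  · -- inl inl
    have hord := horder _ _ h
    rw [myOrderF hp, myOrderF hp] at hord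
    have hj : j = j' := by
      have := Nat.pow_right_injective hp.two_le hord
      exact Fin.ext (by omega)
    subst hj
    have hjk := j.isLt
    have htk : k - 1 - j.val < k := by omega
    have hmem : myGen p k (Sum.inl (a', j)) ∈ myF p k (Sum.inl (a, j)) := h ▸ mem_zpowers _
    have hmem' : ofAdd ((a', (p : ZMod (p ^ k)) ^ (k - 1 - j.val)))
        ∈ zpowers (ofAdd ((a, (p : ZMod (p ^ k)) ^ (k - 1 - j.val)))) := hmem
    rw [myMem] at hmem'
    obtain ⟨n, hn⟩ := hmem'
    rw [Prod.smul_mk, Prod.mk.injEq] at hn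
    obtain ⟨hn1, hn2⟩ := hn
    rw [zsmul_eq_mul] at hn2
    have h1 : ((n : ℤ) : ZMod p) = 1 := myCong hp htk hn2
    rw [zsmul_eq_mul, h1, one_mul] at hn1
    rw [hn1]
  · -- inl inr
    cases bi'
    · -- false : ⊥
      exfalso
      have hord := horder _ _ h
      rw [myOrderF hp] at hord
      have : orderOf (myGen p k (Sum.inr false)) = 1 := by
        show orderOf (ofAdd ((0 : ZMod p), (0 : ZMod (p ^ k)))) = 1
        rw [show ((0 : ZMod p), (0 : ZMod (p ^ k))) = 0 from rfl, ofAdd_zero, orderOf_one]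
      rw [this] at hord
      exact absurd hord (Nat.ne_of_gt (Nat.one_lt_pow (by omega) hp.one_lt))
    · exact absurd h (myF_ne hp a j)
  · cases bi
    · exfalso
      have hord := horder _ _ h.symm
      rw [myOrderF hp] at hord
      have : orderOf (myGen p k (Sum.inr false)) = 1 := by
        show orderOf (ofAdd ((0 : ZMod p), (0 : ZMod (p ^ k)))) = 1
        rw [show ((0 : ZMod p), (0 : ZMod (p ^ k))) = 0 from rfl, ofAdd_zero, orderOf_one]
      rw [this] at hord
      exact absurd hord (Nat.ne_of_gt (Nat.one_lt_pow (by omega) hp.one_lt))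
    · exact absurd h.symm (myF_ne hp a' j')
  · -- inr inr
    cases bi <;> cases bi' <;> first
      | rfl
      | (exfalso
         have hord := horder _ _ h
         have hfalse : orderOf (myGen p k (Sum.inr false)) = 1 := by
           show orderOf (ofAdd ((0 : ZMod p), (0 : ZMod (p ^ k)))) = 1
           rw [show ((0 : ZMod p), (0 : ZMod (p ^ k))) = 0 from rfl, ofAdd_zero, orderOf_one]
         have htrue : orderOf (myGen p k (Sum.inr true)) = p := myOrderOne hp hk
         rw [hfalse, htrue] at hord
         have := hp.one_lt
         omega)
end Main

section Final

lemma myCount {p k : ℕ} (hp : p.Prime) (hk : 1 ≤ k) :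
    Nat.card {H : Subgroup (Multiplicative (ZMod p × ZMod (p ^ k))) // IsCyclic H}
      = p * k + 2 := by
  haveI : Fact p.Prime := ⟨hp⟩
  haveI : NeZero (p ^ k) := ⟨pow_ne_zero k hp.pos.ne'⟩
  rw [Nat.card_congr (myCyclicEquiv (Multiplicative (ZMod p × ZMod (p ^ k))))]
  have hrange : Set.range (zpowers : Multiplicative (ZMod p × ZMod (p ^ k)) → _)
      = Set.range (myF p k) := by
    ext H
    constructor
    · rintro ⟨x, rfl⟩
      obtain ⟨i, hi⟩ := myF_surj hp hk x
      exact ⟨i, hi.symm⟩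
    · rintro ⟨i, rfl⟩
      exact ⟨myGen p k i, rfl⟩
  rw [hrange, Nat.card_congr (Equiv.ofInjective _ (myF_inj hp hk)).symm]
  simp [Nat.card_sum, Nat.card_prod, Nat.card_zmod, Nat.card_eq_fintype_card]

lemma myNoncyclic {p k : ℕ} (hp : p.Prime) (hk : 1 ≤ k) :
    ¬ IsCyclic (Multiplicative (ZMod p × ZMod (p ^ k))) := by
  haveI : Fact p.Prime := ⟨hp⟩
  haveI : NeZero (p ^ k) := ⟨pow_ne_zero k hp.pos.ne'⟩
  intro hcyc
  obtain ⟨g, hg⟩ := hcyc.exists_generator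
  have h1 : orderOf g = Nat.card (Multiplicative (ZMod p × ZMod (p ^ k))) :=
    orderOf_eq_card_of_forall_mem_zpowers hg
  have h2 : orderOf g ∣ p ^ k := orderOf_dvd_of_pow_eq_one (myKill hp hk g)
  have h3 : Nat.card (Multiplicative (ZMod p × ZMod (p ^ k))) = p ^ (k + 1) := by
    rw [Nat.card_congr Multiplicative.toAdd, Nat.card_prod, Nat.card_zmod, Nat.card_zmod,
      ← pow_succ']
  rw [h1, h3] at h2
  have h4 := Nat.le_of_dvd (pow_pos hp.pos k) h2
  have h5 : p ^ k < p ^ (k + 1) := Nat.pow_lt_pow_right hp.one_lt (by omega)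
  omega

end Final

theorem stmt17 (m : ℕ) (hm : 4 ≤ m) :
    ∃ (G : Type) (_ : CommGroup G) (_ : Finite G),
      ¬ IsCyclic G ∧ Nat.card {H : Subgroup G // IsCyclic H} = m := by
  set n := m - 2 with hn
  have hp : n.minFac.Prime := Nat.minFac_prime (by omega)
  set p := n.minFac with hpdef
  set k := n / p with hkdef
  have hpk : p * k = n := Nat.mul_div_cancel' n.minFac_dvd
  have hk : 1 ≤ k := by
    rcases Nat.eq_zero_or_pos k with h0 | h1
    · rw [h0, mul_zero] at hpk; omega
    · exact h1
  haveI : Fact p.Prime := ⟨hp⟩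
  haveI : NeZero (p ^ k) := ⟨pow_ne_zero k hp.pos.ne'⟩
  refine ⟨Multiplicative (ZMod p × ZMod (p ^ k)), inferInstance, inferInstance,
    myNoncyclic hp hk, ?_⟩
  rw [myCount hp hk, hpk]
  omega
end
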